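/- Let $r \geq 1$ be an integer, $\omega_2$ a nonzero complex number, and $z \in [0,1)$. Define $\mathfrak{F}(\xi; z) = (2\pi i/\omega_2)\, e^{2\pi i \xi z/\omega_2}/(e^{2\pi i \xi/\omega_2} - 1)$. Then for any $\xi \notin \omega_2\mathbb{Z}$, the residue at $\eta = 0$ of $\eta \mapsto \mathfrak{F}(\xi; z)^r \eta^{-1} - \mathfrak{F}(\eta; z)^r \, \mathfrak{F}(\xi - \eta; \{rz\})$ is zero; equivalently, $\mathrm{Res}_{\eta=0}\, \mathfrak{F}(\eta; z)^r \, \mathfrak{F}(\xi - \eta; \{rz\}) = \mathfrak{F}(\xi; z)^r$. -/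

import Mathlib

open Complex Filter
open Topology Polynomial

section aux

variable {f g : ℂ → ℂ}

lemma analyticAt_deriv (hf : AnalyticAt ℂ f 0) : AnalyticAt ℂ (deriv f) 0 := by
  obtain ⟨s, hs, hfs⟩ := hf.exists_mem_nhds_analyticOnNhd
  exact hfs.deriv 0 (mem_of_mem_nhds hs)

lemma evdiff (hf : AnalyticAt ℂ f 0) : ∀ᶠ x in 𝓝 (0:ℂ), DifferentiableAt ℂ f x :=
  hf.eventually_analyticAt.mono fun _ hy => hy.differentiableAt

lemma iD_add (n : ℕ) (hf : AnalyticAt ℂ f 0) (hg : AnalyticAt ℂ g 0) :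
    iteratedDeriv n (fun x => f x + g x) 0 = iteratedDeriv n f 0 + iteratedDeriv n g 0 := by
  induction n generalizing f g with
  | zero => simp
  | succ n ih =>
    have h1 : deriv (fun x => f x + g x) =ᶠ[𝓝 (0:ℂ)] fun x => deriv f x + deriv g x := by
      filter_upwards [evdiff hf, evdiff hg] with y h1 h2
      exact deriv_add h1 h2
    rw [iteratedDeriv_succ', h1.iteratedDeriv_eq n,
      ih (analyticAt_deriv hf) (analyticAt_deriv hg), ← iteratedDeriv_succ',
      ← iteratedDeriv_succ']

lemma iD_const_mul (n : ℕ) (c : ℂ) (hf : AnalyticAt ℂ f 0) :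
    iteratedDeriv n (fun x => c * f x) 0 = c * iteratedDeriv n f 0 := by
  induction n generalizing f with
  | zero => simp
  | succ n ih =>
    have h1 : deriv (fun x => c * f x) =ᶠ[𝓝 (0:ℂ)] fun x => c * deriv f x := by
      filter_upwards [evdiff hf] with y h1
      exact deriv_const_mul c h1
    rw [iteratedDeriv_succ', h1.iteratedDeriv_eq n, ih (analyticAt_deriv hf),
      ← iteratedDeriv_succ']

lemma iD_sub (n : ℕ) (hf : AnalyticAt ℂ f 0) (hg : AnalyticAt ℂ g 0) :
    iteratedDeriv n (fun x => f x - g x) 0 = iteratedDeriv n f 0 - iteratedDeriv n g 0 := by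
  have h2 : AnalyticAt ℂ (fun x => (-1 : ℂ) * g x) 0 := analyticAt_const.mul hg
  have : (fun x => f x - g x) = fun x => f x + (-1 : ℂ) * g x := by ext x; ring
  rw [this, iD_add n hf h2, iD_const_mul n (-1) hg]
  ring

lemma iD_id_mul_succ (n : ℕ) (hf : AnalyticAt ℂ f 0) :
    iteratedDeriv (n+1) (fun x => x * f x) 0 = (n+1 : ℂ) * iteratedDeriv n f 0 := by
  induction n generalizing f with
  | zero =>
    rw [iteratedDeriv_one]
    have := ((hasDerivAt_id (0:ℂ)).mul hf.differentiableAt.hasDerivAt).deriv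
    simp only [one_mul, zero_mul, add_zero, id_eq] at this
    simp
    exact this
  | succ n ih =>
    have ha : AnalyticAt ℂ (fun x : ℂ => x * deriv f x) 0 :=
      analyticAt_id.mul (analyticAt_deriv hf)
    have h1 : deriv (fun x => x * f x) =ᶠ[𝓝 (0:ℂ)] fun x => f x + x * deriv f x := by
      filter_upwards [evdiff hf] with y h1
      rw [deriv_fun_mul differentiableAt_fun_id h1]
      simp
    rw [iteratedDeriv_succ', h1.iteratedDeriv_eq (n+1), iD_add (n+1) hf ha,
      ih (analyticAt_deriv hf), ← iteratedDeriv_succ']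
    push_cast
    ring

lemma iD_pow_mul_lt (hf : AnalyticAt ℂ f 0) :
    ∀ n k, n < k → iteratedDeriv n (fun x => x^k * f x) 0 = 0 := by
  intro n
  induction n generalizing f with
  | zero =>
    intro k hk
    rw [iteratedDeriv_zero]
    simp [zero_pow (by omega : k ≠ 0)]
  | succ n ih =>
    intro k hk
    have ha : AnalyticAt ℂ (fun x : ℂ => (k:ℂ) * (x^(k-1) * f x)) 0 :=
      analyticAt_const.mul ((analyticAt_id.pow _).mul hf)
    have hb : AnalyticAt ℂ (fun x : ℂ => x^k * deriv f x) 0 :=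
      (analyticAt_id.pow _).mul (analyticAt_deriv hf)
    have hc : AnalyticAt ℂ (fun x : ℂ => x^(k-1) * f x) 0 := (analyticAt_id.pow _).mul hf
    have h1 : deriv (fun x => x^k * f x) =ᶠ[𝓝 (0:ℂ)]
        fun x => (k:ℂ) * (x^(k-1) * f x) + x^k * deriv f x := by
      filter_upwards [evdiff hf] with y h1
      rw [deriv_fun_mul (differentiableAt_pow k) h1, deriv_pow_field]
      ring
    rw [iteratedDeriv_succ', h1.iteratedDeriv_eq n, iD_add n ha hb,
      iD_const_mul n _ hc, ih (analyticAt_deriv hf) k (Nat.lt_of_succ_lt hk),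
      ih hf (k-1) (by omega)]
    ring

lemma iD_pow_mul_self (hf : AnalyticAt ℂ f 0) :
    ∀ n, iteratedDeriv n (fun x => x^n * f x) 0 = (n.factorial : ℂ) * f 0 := by
  intro n
  induction n generalizing f with
  | zero => simp
  | succ n ih =>
    have ha : AnalyticAt ℂ (fun x : ℂ => ((n:ℂ)+1) * (x^n * f x)) 0 :=
      analyticAt_const.mul ((analyticAt_id.pow _).mul hf)
    have hb : AnalyticAt ℂ (fun x : ℂ => x^(n+1) * deriv f x) 0 :=
      (analyticAt_id.pow _).mul (analyticAt_deriv hf)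
    have hc : AnalyticAt ℂ (fun x : ℂ => x^n * f x) 0 := (analyticAt_id.pow _).mul hf
    have h1 : deriv (fun x => x^(n+1) * f x) =ᶠ[𝓝 (0:ℂ)]
        fun x => ((n:ℂ)+1) * (x^n * f x) + x^(n+1) * deriv f x := by
      filter_upwards [evdiff hf] with y h1
      rw [deriv_fun_mul (differentiableAt_pow (n+1)) h1, deriv_pow_field]
      push_cast
      ring
    rw [iteratedDeriv_succ', h1.iteratedDeriv_eq n, iD_add n ha hb,
      iD_const_mul n _ hc, ih hf, iD_pow_mul_lt (analyticAt_deriv hf) n (n+1) (Nat.lt_succ_self n)]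
    push_cast [Nat.factorial_succ]
    ring

end aux

/-- The generating function `𝔉(ξ; z; ω₂)` of Lerch zeta-functions. -/
noncomputable def lerchF (ω₂ z ξ : ℂ) : ℂ :=
  (2 * Real.pi * Complex.I / ω₂) * Complex.exp (2 * Real.pi * Complex.I * ξ * z / ω₂) /
    (Complex.exp (2 * Real.pi * Complex.I * ξ / ω₂) - 1)

set_option maxHeartbeats 1000000 in
theorem residue_lerchF_power (r : ℕ) (hr : 1 ≤ r) (ω₂ : ℂ) (hω : ω₂ ≠ 0)
    (z : ℝ) (hz0 : 0 ≤ z) (hz1 : z < 1) (ξ : ℂ) (hξ : ∀ n : ℤ, ξ ≠ n * ω₂) :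
    ∃ g : ℂ → ℂ, AnalyticAt ℂ g 0 ∧
      (∀ᶠ η in nhdsWithin (0 : ℂ) {0}ᶜ,
        (lerchF ω₂ (z : ℂ) η) ^ r * lerchF ω₂ ((Int.fract (r * z) : ℝ) : ℂ) (ξ - η)
          = g η / η ^ r) ∧
      iteratedDeriv (r - 1) g 0 / (Nat.factorial (r - 1) : ℂ) = (lerchF ω₂ (z : ℂ) ξ) ^ r := by
  have hπ : (Real.pi : ℝ) ≠ 0 := Real.pi_ne_zero
  set a : ℂ := 2 * Real.pi * Complex.I / ω₂ with ha_def
  clear_value a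
  have h2πI : (2 * (Real.pi : ℂ) * Complex.I) ≠ 0 := by
    simp [Real.pi_ne_zero, Complex.I_ne_zero, Complex.ofReal_ne_zero]
  have ha : a ≠ 0 := by rw [ha_def]; exact div_ne_zero h2πI hω
  -- basic exp facts
  have hlerch : ∀ x y : ℂ, lerchF ω₂ x y
      = a * Complex.exp (a * y * x) / (Complex.exp (a * y) - 1) := by
    intro x y
    rw [lerchF, show 2 * (Real.pi:ℂ) * Complex.I * y * x / ω₂ = a * y * x by
        rw [ha_def]; ring,
      show 2 * (Real.pi:ℂ) * Complex.I * y / ω₂ = a * y by rw [ha_def]; ring]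
    rw [ha_def]
  set q : ℂ := Complex.exp (a * ξ) with hq_def
  clear_value q
  have hExp_ne_one : ∀ x : ℂ, (∀ n : ℤ, x ≠ n * ω₂) → Complex.exp (a * x) ≠ 1 := by
    intro x hx h
    rw [Complex.exp_eq_one_iff] at h
    obtain ⟨n, hn⟩ := h
    apply hx n
    rw [ha_def, div_mul_eq_mul_div, div_eq_iff hω] at hn
    apply mul_left_cancel₀ h2πI
    linear_combination hn
  have hq1 : q ≠ 1 := by rw [hq_def]; exact hExp_ne_one ξ hξ
  have hq0 : q ≠ 0 := by rw [hq_def]; exact Complex.exp_ne_zero _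
  have hs0 : q - 1 ≠ 0 := sub_ne_zero.mpr hq1
  -- m and w
  set w : ℝ := Int.fract ((r:ℝ) * z) with hw_def
  clear_value w
  set m : ℕ := ⌊(r:ℝ) * z⌋₊ with hm_def
  clear_value m
  have hrz0 : (0:ℝ) ≤ (r:ℝ) * z := by positivity
  have hmw : ((m:ℝ)) + w = (r:ℝ) * z := by
    rw [hw_def, hm_def, natCast_floor_eq_intCast_floor hrz0]
    exact Int.floor_add_fract _
  have hmr : m < r := by
    rw [hm_def]
    apply Nat.floor_lt hrz0 |>.mpr
    calc (r:ℝ) * z < r * 1 := by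
          apply mul_lt_mul_of_pos_left hz1 (by exact_mod_cast hr)
      _ = r := by ring
  -- the polynomial
  set P : Polynomial ℂ := (1 + X)^m * C ((q-1)^r) - C (q^m) * X^r with hP_def
  clear_value P
  have hroot : P.IsRoot (q - 1) := by
    simp only [hP_def, IsRoot, eval_sub, eval_mul, eval_pow, eval_add, eval_one, eval_X, eval_C]
    rw [show (1:ℂ) + (q - 1) = q by ring]
    ring
  obtain ⟨Q, hQ⟩ : (X - C (q-1)) ∣ P := dvd_iff_isRoot.mpr hroot
  have hPdeg : P.natDegree ≤ r := by
    rw [hP_def]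
    apply le_trans (natDegree_sub_le _ _)
    apply max_le
    · apply le_trans (natDegree_mul_le)
      have h1 : ((1 + X : Polynomial ℂ)^m).natDegree ≤ m := by
        apply le_trans (natDegree_pow_le)
        have : (1 + X : Polynomial ℂ).natDegree ≤ 1 := by
          apply le_trans (natDegree_add_le _ _)
          simp
        nlinarith
      simp only [natDegree_C, add_zero]
      omega
    · apply le_trans (natDegree_mul_le)
      simp [natDegree_X_pow]
  have hPcoeff : P.coeff r = -(q^m) := by
    rw [hP_def, coeff_sub, coeff_C_mul, coeff_X_pow, if_pos rfl, mul_one]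
    have h1 : ((1 + X : Polynomial ℂ)^m * C ((q-1)^r)).natDegree < r := by
      apply lt_of_le_of_lt (natDegree_mul_le)
      have : ((1 + X : Polynomial ℂ)^m).natDegree ≤ m := by
        apply le_trans (natDegree_pow_le)
        have : (1 + X : Polynomial ℂ).natDegree ≤ 1 := by
          apply le_trans (natDegree_add_le _ _); simp
        nlinarith
      simp only [natDegree_C, add_zero]
      omega
    rw [coeff_eq_zero_of_natDegree_lt h1]
    ring
  have hqm0 : q ^ m ≠ 0 := pow_ne_zero _ hq0
  have hPne : P ≠ 0 := by
    intro h
    have h2 := hPcoeff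
    rw [h, Polynomial.coeff_zero] at h2
    exact hqm0 (by linear_combination h2)
  have hQne : Q ≠ 0 := by
    intro h
    rw [h, mul_zero] at hQ
    exact hPne hQ
  have hQdeg : Q.natDegree < r := by
    have h1 : P.natDegree = 1 + Q.natDegree := by
      rw [hQ, natDegree_mul (X_sub_C_ne_zero (q-1)) hQne, natDegree_X_sub_C]
    omega
  have hQtop : Q.coeff (r-1) = -(q^m) := by
    have h1 := congrArg (fun p => Polynomial.coeff p r) hQ
    simp only [hPcoeff] at h1
    rw [sub_mul, coeff_sub, show r = (r-1)+1 by omega, coeff_X_mul,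
      coeff_C_mul, coeff_eq_zero_of_natDegree_lt (by omega : Q.natDegree < r-1+1)] at h1
    linear_combination -h1
  -- the analytic extension φ of (exp(aη)-1)/η
  set φ : ℂ → ℂ := dslope (fun η => Complex.exp (a * η) - 1) 0 with hφ_def
  clear_value φ
  set E : ℂ → ℂ := fun η => Complex.exp (a * η) with hE_def
  clear_value E
  have hEa : AnalyticAt ℂ E 0 := by
    rw [hE_def]; exact (analyticAt_const.mul analyticAt_id).cexp
  have hφa : AnalyticAt ℂ φ 0 := by
    have hE1 : AnalyticAt ℂ (fun η : ℂ => Complex.exp (a*η) - 1) 0 := by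
      exact (analyticAt_const.mul analyticAt_id).cexp.sub analyticAt_const
    obtain ⟨p, hp⟩ := hE1
    rw [hφ_def]
    exact ⟨p.fslope, hp.has_fpower_series_dslope_fslope⟩
  have hφ0 : φ 0 = a := by
    rw [hφ_def, dslope_same]
    have h1 : HasDerivAt (fun η : ℂ => a * η) a 0 := by
      simpa using (hasDerivAt_id (0:ℂ)).const_mul a
    have h2 := (h1.cexp).sub_const 1
    rw [h2.deriv, mul_zero, Complex.exp_zero, one_mul]
  have hφ0' : φ 0 ≠ 0 := by rw [hφ0]; exact ha
  have hφval : ∀ x : ℂ, x ≠ 0 → φ x = (Complex.exp (a*x) - 1) / x := by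
    intro x hx
    rw [hφ_def, dslope_of_ne _ hx, slope_def_field]
    rw [mul_zero, Complex.exp_zero, sub_self, sub_zero, sub_zero]
  -- the function W
  set W : ℂ → ℂ := fun η => ∑ k ∈ Finset.range (r-1),
      (Q.coeff k / (a * ((r-1-k : ℕ):ℂ))) * (η^k * ((φ η)^(r-1-k))⁻¹) with hW_def
  clear_value W
  have hWa : AnalyticAt ℂ W 0 := by
    rw [hW_def]
    apply Finset.analyticAt_fun_sum
    intro k _
    exact analyticAt_const.mul ((analyticAt_id.pow k).mul
      ((hφa.pow _).inv (pow_ne_zero _ hφ0')))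
  set K : ℂ := a^(r+1) * Complex.exp (a*ξ*(w:ℂ)) / (q-1)^r with hK_def
  clear_value K
  have hden : (fun η : ℂ => q - E η) 0 ≠ 0 := by
    simp only [hE_def, mul_zero, Complex.exp_zero]
    exact hs0
  have hfA : AnalyticAt ℂ (fun η : ℂ => E η / (q - E η)) 0 :=
    hEa.div (analyticAt_const.sub hEa) hden
  have hfC : AnalyticAt ℂ (fun η : ℂ => (φ η)⁻¹) 0 := hφa.inv hφ0'
  have hf1 : AnalyticAt ℂ (fun _ : ℂ => (1:ℂ)) 0 := analyticAt_const
  have hfA' : AnalyticAt ℂ (fun η : ℂ => η^r * (E η / (q - E η))) 0 := (analyticAt_id.pow r).mul hfA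
  have hfB' : AnalyticAt ℂ (fun η : ℂ => η^r * (1:ℂ)) 0 := (analyticAt_id.pow r).mul hf1
  have hfC' : AnalyticAt ℂ (fun η : ℂ => η^(r-1) * (φ η)⁻¹) 0 := (analyticAt_id.pow (r-1)).mul hfC
  have hA : AnalyticAt ℂ (fun η : ℂ => q^m * (η^r * (E η / (q - E η)))) 0 :=
    analyticAt_const.mul hfA'
  have hB : AnalyticAt ℂ (fun η : ℂ => q^m * (η^r * (1:ℂ))) 0 :=
    analyticAt_const.mul ((analyticAt_id.pow r).mul analyticAt_const)
  have hC : AnalyticAt ℂ (fun η : ℂ => q^m * (η^(r-1) * (φ η)⁻¹)) 0 :=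
    analyticAt_const.mul ((analyticAt_id.pow (r-1)).mul hfC)
  have hD1 : AnalyticAt ℂ (fun η : ℂ => η * deriv W η) 0 :=
    analyticAt_id.mul (analyticAt_deriv hWa)
  have hD2 : AnalyticAt ℂ (fun η : ℂ => ((r:ℂ)-1) * W η) 0 := analyticAt_const.mul hWa
  have hDp : AnalyticAt ℂ (fun η : ℂ => η * deriv W η - ((r:ℂ)-1) * W η) 0 := hD1.sub hD2
  have hAB : AnalyticAt ℂ (fun η : ℂ => q^m * (η^r * (E η / (q - E η))) + q^m * (η^r * (1:ℂ))) 0 :=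
    hA.add hB
  have hABC : AnalyticAt ℂ (fun η : ℂ => q^m * (η^r * (E η / (q - E η))) + q^m * (η^r * (1:ℂ))
      + q^m * (η^(r-1) * (φ η)⁻¹)) 0 := hAB.add hC
  have hinner : AnalyticAt ℂ (fun η : ℂ => q^m * (η^r * (E η / (q - E η))) + q^m * (η^r * (1:ℂ))
      + q^m * (η^(r-1) * (φ η)⁻¹) + (η * deriv W η - ((r:ℂ)-1) * W η)) 0 := hABC.add hDp
  refine ⟨fun η => K * (q^m * (η^r * (E η / (q - E η))) + q^m * (η^r * (1:ℂ))
      + q^m * (η^(r-1) * (φ η)⁻¹) + (η * deriv W η - ((r:ℂ)-1) * W η)), analyticAt_const.mul hinner,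
      ?_, ?_⟩
  · -- the eventual identity on the punctured neighborhood
    have hENe1 : ∀ x : ℂ, x ≠ 0 → ‖x‖ < ‖ω₂‖ → Complex.exp (a*x) ≠ 1 := by
      intro x hx0 hxa h
      rw [Complex.exp_eq_one_iff] at h
      obtain ⟨n, hn⟩ := h
      rw [ha_def, div_mul_eq_mul_div, div_eq_iff hω] at hn
      have hxn : x = n * ω₂ := by
        apply mul_left_cancel₀ h2πI
        linear_combination hn
      rcases eq_or_ne n 0 with h0 | h0
      · rw [h0] at hxn; simp at hxn; exact hx0 hxn
      · have h1 : (1:ℝ) ≤ ‖((n:ℤ):ℂ)‖ := by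
          rw [Complex.norm_intCast]
          exact_mod_cast Int.one_le_abs h0
        have h2 : ‖ω₂‖ ≤ ‖x‖ := by
          rw [hxn, norm_mul]
          nlinarith [norm_nonneg ω₂]
        linarith
    have hev1 : ∀ᶠ η in 𝓝 (0:ℂ), ‖η‖ < ‖ω₂‖ := by
      have hopen : IsOpen {x : ℂ | ‖x‖ < ‖ω₂‖} :=
        isOpen_lt continuous_norm continuous_const
      exact hopen.eventually_mem (by simpa using norm_pos_iff.mpr hω)
    have hev2 : ∀ᶠ η in 𝓝 (0:ℂ), E η ≠ q := by
      apply ContinuousAt.eventually_ne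
      · rw [hE_def]; fun_prop
      · simp only [hE_def, mul_zero, Complex.exp_zero]
        exact fun h => hq1 h.symm
    filter_upwards [eventually_nhdsWithin_of_eventually_nhds (hev1.and hev2),
        self_mem_nhdsWithin] with η hη hη0'
    obtain ⟨habs, hEq⟩ := hη
    have hη0 : η ≠ 0 := hη0'
    have hu1 : Complex.exp (a*η) ≠ 1 := hENe1 η hη0 habs
    have ht' : Complex.exp (a*η) - 1 ≠ 0 := sub_ne_zero.mpr hu1
    have hqu : q - Complex.exp (a*η) ≠ 0 := by
      rw [hE_def] at hEq
      exact sub_ne_zero.mpr (Ne.symm hEq)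
    have hu0 : Complex.exp (a*η) ≠ 0 := Complex.exp_ne_zero _
    have hφv : φ η = (Complex.exp (a*η) - 1)/η := hφval η hη0
    have hφn : φ η ≠ 0 := by rw [hφv]; exact div_ne_zero ht' hη0
    -- exp identities
    have hmw2 : ((m:ℂ)) + (w:ℂ) = (r:ℂ)*(z:ℂ) := by exact_mod_cast hmw
    have hsplitz : Complex.exp (a*η*(z:ℂ))^r
        = Complex.exp (a*η)^m * Complex.exp (a*η*(w:ℂ)) := by
      rw [← Complex.exp_nat_mul, ← Complex.exp_nat_mul, ← Complex.exp_add]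
      congr 1
      linear_combination (-(a*η))*hmw2
    have hsub1 : Complex.exp (a*(ξ-η)*(w:ℂ)) * Complex.exp (a*η*(w:ℂ))
        = Complex.exp (a*ξ*(w:ℂ)) := by
      rw [← Complex.exp_add]; congr 1; ring
    have hsub2 : Complex.exp (a*(ξ-η)) * Complex.exp (a*η) = q := by
      rw [hq_def, ← Complex.exp_add]; congr 1; ring
    have hZ : Complex.exp (a*(ξ-η)) - 1 ≠ 0 := by
      intro h
      rw [sub_eq_zero] at h
      apply hqu
      rw [← hsub2, h, one_mul, sub_self]
    -- the sum S
    set S : ℂ := ∑ k ∈ Finset.range (r-1), Q.coeff k * (Complex.exp (a*η) - 1)^k with hS_def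
    clear_value S
    -- the evaluated polynomial identity
    have hpolyS : (Complex.exp (a*η))^m * (q-1)^r - q^m * (Complex.exp (a*η) - 1)^r
        = ((Complex.exp (a*η) - 1) - (q-1)) * (S + (-(q^m)) * (Complex.exp (a*η)-1)^(r-1)) := by
      have h1 := congrArg (Polynomial.eval (Complex.exp (a*η) - 1)) hQ
      simp only [hP_def, eval_sub, eval_mul, eval_pow, eval_add, eval_one, eval_X, eval_C] at h1
      rw [Polynomial.eval_eq_sum_range' hQdeg] at h1
      have h2 : ∑ k ∈ Finset.range r, Q.coeff k * (Complex.exp (a*η)-1)^k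
          = S + (-(q^m)) * (Complex.exp (a*η)-1)^(r-1) := by
        rw [hS_def]
        conv_lhs => rw [show r = (r-1)+1 by omega]
        rw [Finset.sum_range_succ, hQtop]
      rw [h2] at h1
      rw [show (1:ℂ) + (Complex.exp (a*η) - 1) = Complex.exp (a*η) by ring] at h1
      linear_combination h1
    -- the derivative identity
    have hD : η * deriv W η - ((r:ℂ)-1) * W η
        = η^r * (-(Complex.exp (a*η)) * S / (Complex.exp (a*η) - 1)^r) := by
      set V : ℂ → ℂ := fun x => ∑ k ∈ Finset.range (r-1),
          (Q.coeff k / (a * ((r-1-k : ℕ):ℂ))) * ((Complex.exp (a*x) - 1)^(r-1-k))⁻¹ with hV_def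
      clear_value V
      have hWV : W =ᶠ[𝓝 η] fun x => x^(r-1) * V x := by
        have hopen2 : IsOpen {x : ℂ | x ≠ 0 ∧ ‖x‖ < ‖ω₂‖} :=
          isOpen_ne.inter (isOpen_lt continuous_norm continuous_const)
        filter_upwards [hopen2.eventually_mem (Set.mem_setOf.mpr ⟨hη0, habs⟩)] with x hx
        obtain ⟨hx0, hxa⟩ := hx
        have hx1 : Complex.exp (a*x) - 1 ≠ 0 := sub_ne_zero.mpr (hENe1 x hx0 hxa)
        rw [hW_def, hV_def]
        simp only
        rw [Finset.mul_sum]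
        apply Finset.sum_congr rfl
        intro k hk
        have hkr : k < r - 1 := Finset.mem_range.mp hk
        rw [hφval x hx0, div_pow, inv_div]
        have hxp : x^k * x^(r-1-k) = x^(r-1) := by rw [← pow_add]; congr 1; omega
        have hNz : ((r-1-k:ℕ):ℂ) ≠ 0 := Nat.cast_ne_zero.mpr (by omega)
        rw [← hxp]
        field_simp [ha, hNz, hx1]
      have hVd : HasDerivAt V (∑ k ∈ Finset.range (r-1),
          (-(Q.coeff k)) * Complex.exp (a*η) * ((Complex.exp (a*η) - 1)^(r-k))⁻¹) η := by
        rw [hV_def]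
        apply HasDerivAt.fun_sum
        intro k hk
        have hkr : k < r - 1 := Finset.mem_range.mp hk
        have h1 : HasDerivAt (fun x : ℂ => a * x) a η := by
          simpa using (hasDerivAt_id η).const_mul a
        have h2 : HasDerivAt (fun x : ℂ => Complex.exp (a*x) - 1) (Complex.exp (a*η) * a) η :=
          (h1.cexp).sub_const 1
        have h3 := ((h2.pow (r-1-k)).inv (pow_ne_zero _ ht')).const_mul
            (Q.coeff k / (a * ((r-1-k : ℕ):ℂ)))
        refine h3.congr_deriv ?_
        symm
        simp only [Pi.pow_apply]
        obtain ⟨N, hNeq⟩ : ∃ N, r - 1 - k = N + 1 := ⟨r-k-2, by omega⟩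
        rw [hNeq, show r - k = N + 2 by omega, show N + 1 - 1 = N from rfl]
        have hNz : ((N+1:ℕ):ℂ) ≠ 0 := Nat.cast_ne_zero.mpr (by omega)
        rw [← div_eq_mul_inv, div_mul_div_comm,
          div_eq_div_iff (pow_ne_zero _ ht')
            (mul_ne_zero (mul_ne_zero ha hNz) (pow_ne_zero 2 (pow_ne_zero _ ht')))]
        ring
      have hdW : deriv W η = ↑(r-1) * η^(r-1-1) * V η + η^(r-1) * (∑ k ∈ Finset.range (r-1),
          (-(Q.coeff k)) * Complex.exp (a*η) * ((Complex.exp (a*η) - 1)^(r-k))⁻¹) := by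
        rw [hWV.deriv_eq]
        exact ((hasDerivAt_pow (r-1) η).mul hVd).deriv
      have hWη : W η = η^(r-1) * V η := hWV.self_of_nhds
      have hsum2 : ∑ k ∈ Finset.range (r-1),
          (-(Q.coeff k)) * Complex.exp (a*η) * ((Complex.exp (a*η) - 1)^(r-k))⁻¹
          = -(Complex.exp (a*η)) * S / (Complex.exp (a*η) - 1)^r := by
        rw [eq_div_iff (pow_ne_zero r ht'), Finset.sum_mul, hS_def, Finset.mul_sum]
        apply Finset.sum_congr rfl
        intro k hk
        have hkr : k < r - 1 := Finset.mem_range.mp hk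
        have hps : (Complex.exp (a*η) - 1)^(r-k) * (Complex.exp (a*η) - 1)^k
            = (Complex.exp (a*η) - 1)^r := by rw [← pow_add]; congr 1; omega
        rw [← hps]
        field_simp [ht']
      rw [hdW, hWη, hsum2]
      by_cases hr1 : r = 1
      · subst hr1; simp
      · have hc : (↑(r-1) : ℂ) = (r:ℂ)-1 := by
          rw [Nat.cast_sub hr]; simp
        have hη1 : η * η^(r-1-1) = η^(r-1) := by rw [← pow_succ']; congr 1; omega
        have hη2 : η * η^(r-1) = η^r := by rw [← pow_succ']; congr 1; omega
        rw [hc]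
        linear_combination (((r:ℂ)-1) * V η) * hη1 + (-(Complex.exp (a*η)) * S
          / (Complex.exp (a*η) - 1)^r) * hη2
    -- now the main identity
    rw [eq_div_iff (pow_ne_zero r hη0), hlerch, hlerch]
    rw [hE_def]
    beta_reduce
    rw [hφv, hD, hK_def, inv_div]
    rw [div_pow, mul_pow, hsplitz]
    rw [show Complex.exp (a*(ξ-η)*(w:ℂ)) = Complex.exp (a*ξ*(w:ℂ)) / Complex.exp (a*η*(w:ℂ)) from by
        rw [eq_div_iff (Complex.exp_ne_zero _)]; exact hsub1,
      show Complex.exp (a*(ξ-η)) = q / Complex.exp (a*η) from by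
        rw [eq_div_iff hu0]; exact hsub2,
      div_sub_one hu0]
    have er : ∀ x : ℂ, x^r = x^(r-1) * x := fun x => by
      conv_lhs => rw [show r = (r-1)+1 by omega]
      rw [pow_succ]
    have er1 : ∀ x : ℂ, x^(r+1) = x^(r-1) * x * x := fun x => by
      conv_lhs => rw [show r+1 = ((r-1)+1)+1 by omega]
      rw [pow_succ, pow_succ]
    simp only [er, er1] at hpolyS ⊢
    field_simp [ha, ht', hqu, hs0, hη0, hu0, Complex.exp_ne_zero]
    linear_combination (Complex.exp (a*η)) * hpolyS
  · -- the iterated derivative computation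
    rw [iD_const_mul (r-1) K hinner, iD_add (r-1) hABC hDp, iD_add (r-1) hAB hC,
      iD_add (r-1) hA hB,
      iD_const_mul (r-1) (q^m) hfA',
      iD_const_mul (r-1) (q^m) hfB',
      iD_const_mul (r-1) (q^m) hfC',
      iD_sub (r-1) hD1 hD2,
      iD_const_mul (r-1) ((r:ℂ)-1) hWa,
      iD_pow_mul_lt hfA (r-1) r (by omega),
      iD_pow_mul_lt hf1 (r-1) r (by omega),
      iD_pow_mul_self hfC (r-1)]
    have hDzero : iteratedDeriv (r-1) (fun η : ℂ => η * deriv W η) 0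
        - ((r:ℂ)-1) * iteratedDeriv (r-1) W 0 = 0 := by
      by_cases hr1 : r = 1
      · subst hr1
        simp [iteratedDeriv_zero]
      · obtain ⟨n', hn'⟩ : ∃ n', r - 1 = n' + 1 := ⟨r-2, by omega⟩
        have hc : ((n':ℂ)+1) = (r:ℂ)-1 := by
          have h1 : (n' + 1 : ℕ) = r - 1 := hn'.symm
          have h2 : ((r-1 : ℕ) : ℂ) = (r:ℂ) - 1 := by push_cast [Nat.cast_sub hr]; ring
          rw [← h2, ← h1]; push_cast; ring
        rw [hn', iD_id_mul_succ n' (analyticAt_deriv hWa), ← iteratedDeriv_succ', ← hn', hc]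
        ring
      -- end
    rw [sub_eq_zero] at hDzero
    rw [hDzero]
    have hfact : ((r-1).factorial : ℂ) ≠ 0 := by
      exact_mod_cast Nat.factorial_ne_zero (r-1)
    have hexp : Complex.exp (a*ξ*(z:ℂ))^r = q^m * Complex.exp (a*ξ*(w:ℂ)) := by
      rw [hq_def, ← Complex.exp_nat_mul, ← Complex.exp_nat_mul, ← Complex.exp_add]
      congr 1
      have hmw2 : ((m:ℂ)) + (w:ℂ) = (r:ℂ)*(z:ℂ) := by exact_mod_cast hmw
      linear_combination (-(a*ξ))*hmw2
    rw [hlerch, div_pow, mul_pow, hexp, hK_def, hφ0, ← hq_def]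
    field_simp
    ring
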